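/- Let X be a compact Hausdorff space, ∗ a continuous t-norm, φ : X → [0,1] continuous, t < max φ, and ψ : X → [0,1] continuous with ψ ≡ 1 on φ⁻¹([t,1]). Then there exists a continuous ψ' : X → [0,1] with ψ' ≡ 1 on φ⁻¹([t,1]), ψ' ≤ ψ, and ψ' comonotone with φ. -/

import Mathlib

open Set

/-- A continuous triangular norm on `[0,1]`, modeled as a binary operation on `ℝ`
restricted to the unit interval. -/
structure Tnorm where
  op : ℝ → ℝ → ℝ
  mem' : ∀ a b : ℝ, a ∈ Set.Icc (0:ℝ) 1 → b ∈ Set.Icc (0:ℝ) 1 → op a b ∈ Set.Icc (0:ℝ) 1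
  comm' : ∀ a b : ℝ, op a b = op b a
  assoc' : ∀ a b c : ℝ, op (op a b) c = op a (op b c)
  mono' : ∀ a b c d : ℝ, a ≤ b → c ≤ d → op a c ≤ op b d
  one_id' : ∀ a ∈ Set.Icc (0:ℝ) 1, op a 1 = a
  cont' : Continuous fun p : ℝ × ℝ => op p.1 p.2

/-- An upper-semicontinuous capacity on a topological space `X`. -/
structure Capacity (X : Type*) [TopologicalSpace X] where
  toFun : Set X → ℝ
  nonneg' : ∀ A : Set X, 0 ≤ toFun A
  le_one' : ∀ A : Set X, toFun A ≤ 1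
  empty' : toFun (∅ : Set X) = 0
  univ' : toFun (Set.univ : Set X) = 1
  mono' : ∀ A B : Set X, A ⊆ B → toFun A ≤ toFun B
  usc' : ∀ F : Set X, IsClosed F → ∀ a : ℝ, toFun F < a →
    ∃ O : Set X, IsOpen O ∧ F ⊆ O ∧ ∀ B : Set X, B ⊆ O → IsCompact B → toFun B < a

/-- Two functions are comonotone (equiordered). -/
def Comonotone {X : Type*} (φ ψ : X → ℝ) : Prop :=
  ∀ x₁ x₂ : X, 0 ≤ (φ x₁ - φ x₂) * (ψ x₁ - ψ x₂)

section ComonAuxSection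


noncomputable def clamp (u : ℝ) : ℝ := max 0 (min 1 u)

lemma clamp_nonneg (u : ℝ) : 0 ≤ clamp u := le_max_left _ _

lemma clamp_le_one (u : ℝ) : clamp u ≤ 1 := max_le zero_le_one (min_le_left _ _)

lemma clamp_mono : Monotone clamp := fun a b hab =>
  max_le_max le_rfl (min_le_min le_rfl hab)

lemma continuous_clamp : Continuous clamp :=
  continuous_const.max (continuous_const.min continuous_id)

lemma clamp_of_nonpos {u : ℝ} (h : u ≤ 0) : clamp u = 0 :=
  max_eq_left ((min_le_right _ _).trans h)

lemma clamp_of_one_le {u : ℝ} (h : 1 ≤ u) : clamp u = 1 := by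
  rw [clamp, min_eq_left h, max_eq_right zero_le_one]

/-- Crux compactness lemma: `ψ` is uniformly close to 1 on a uniform
neighborhood (in `φ`-level) of `{φ ≥ t}`. -/
lemma crux {X : Type*} [TopologicalSpace X] [CompactSpace X]
    (φ ψ : X → ℝ) (hφc : Continuous φ) (hψc : Continuous ψ)
    (hφr : ∀ x, φ x ≤ 1) (t : ℝ)
    (hψ1 : ∀ x, t ≤ φ x → ψ x = 1) (ε : ℝ) (hε : 0 < ε) :
    ∃ δ > 0, ∀ y, t - δ ≤ φ y → 1 - ε ≤ ψ y := by
  by_cases hC : {y : X | ψ y ≤ 1 - ε}.Nonempty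
  · have hCc : IsClosed {y : X | ψ y ≤ 1 - ε} := isClosed_le hψc continuous_const
    obtain ⟨z, hzC, hz⟩ := hCc.isCompact.exists_isMaxOn hC hφc.continuousOn
    have hzt : φ z < t := by
      by_contra h
      push_neg at h
      have := hψ1 z h
      have : (1:ℝ) ≤ 1 - ε := this ▸ hzC
      linarith
    refine ⟨(t - φ z) / 2, by linarith, fun y hy => ?_⟩
    by_contra h
    push_neg at h
    have hyC : y ∈ {y : X | ψ y ≤ 1 - ε} := le_of_lt h
    have := hz hyC
    simp only [mem_setOf_eq] at this
    linarith
  · refine ⟨1, one_pos, fun y _ => ?_⟩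
    by_contra h
    push_neg at h
    exact hC ⟨y, le_of_lt h⟩

noncomputable def omegaMod (d : ℕ → ℝ) (r : ℝ) : ℝ :=
  ∑' k, (1/2:ℝ)^k * clamp (r / d k)

lemma geo_summable : Summable (fun k : ℕ => (1/2:ℝ)^k) :=
  summable_geometric_of_lt_one (by norm_num) (by norm_num)

lemma omegaMod_term_nonneg (d : ℕ → ℝ) (r : ℝ) (k : ℕ) :
    0 ≤ (1/2:ℝ)^k * clamp (r / d k) :=
  mul_nonneg (by positivity) (clamp_nonneg _)

lemma omegaMod_term_le (d : ℕ → ℝ) (r : ℝ) (k : ℕ) :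
    (1/2:ℝ)^k * clamp (r / d k) ≤ (1/2:ℝ)^k := by
  calc (1/2:ℝ)^k * clamp (r / d k) ≤ (1/2:ℝ)^k * 1 :=
    mul_le_mul_of_nonneg_left (clamp_le_one _) (by positivity)
  _ = (1/2:ℝ)^k := mul_one _

lemma omegaMod_summable (d : ℕ → ℝ) (r : ℝ) :
    Summable (fun k => (1/2:ℝ)^k * clamp (r / d k)) :=
  Summable.of_nonneg_of_le (omegaMod_term_nonneg d r) (omegaMod_term_le d r) geo_summable

lemma omegaMod_nonneg (d : ℕ → ℝ) (r : ℝ) : 0 ≤ omegaMod d r :=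
  tsum_nonneg (omegaMod_term_nonneg d r)

lemma omegaMod_continuous (d : ℕ → ℝ) : Continuous (omegaMod d) := by
  refine continuous_tsum (fun k => ?_) geo_summable (fun k r => ?_)
  · exact continuous_const.mul (continuous_clamp.comp (continuous_id.div_const _))
  · rw [Real.norm_eq_abs, abs_of_nonneg (omegaMod_term_nonneg d r k)]
    exact omegaMod_term_le d r k

lemma omegaMod_mono (d : ℕ → ℝ) (hd : ∀ k, 0 < d k) : Monotone (omegaMod d) := by
  intro a b hab
  refine Summable.tsum_le_tsum (fun k => ?_) (omegaMod_summable d a) (omegaMod_summable d b)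
  exact mul_le_mul_of_nonneg_left
    (clamp_mono (by gcongr; exact (hd k).le)) (by positivity)

lemma omegaMod_zero (d : ℕ → ℝ) (hd : ∀ k, 0 < d k) {r : ℝ} (hr : r ≤ 0) :
    omegaMod d r = 0 := by
  have h : ∀ k : ℕ, (1/2:ℝ)^k * clamp (r / d k) = 0 := by
    intro k
    rw [clamp_of_nonpos (div_nonpos_of_nonpos_of_nonneg hr (hd k).le), mul_zero]
  rw [omegaMod, funext h, tsum_zero]

lemma omegaMod_lb (d : ℕ → ℝ) (hd : ∀ k, 0 < d k) (r : ℝ) (k₀ : ℕ)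
    (hk : ∀ k, k₀ ≤ k → d k ≤ r) : (1/2:ℝ)^k₀ * 2 ≤ omegaMod d r := by
  have h1 : ∀ k : ℕ, (1/2:ℝ)^(k + k₀) ≤ (1/2:ℝ)^(k + k₀) * clamp (r / d (k + k₀)) := by
    intro k
    rw [clamp_of_one_le ((one_le_div (hd _)).2 (hk _ (Nat.le_add_left _ _))), mul_one]
  have hsum : Summable (fun k : ℕ => (1/2:ℝ)^(k + k₀)) := by
    simpa [pow_add] using geo_summable.mul_right ((1/2:ℝ)^k₀)
  have h2 : ∑' k : ℕ, (1/2:ℝ)^(k + k₀) ≤ omegaMod d r :=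
    Summable.tsum_le_tsum_of_inj (fun k => k + k₀) (add_left_injective k₀)
      (fun c _ => omegaMod_term_nonneg d r c) h1 hsum (omegaMod_summable d r)
  have h3 : ∑' k : ℕ, (1/2:ℝ)^(k + k₀) = (1/2:ℝ)^k₀ * 2 := by
    have h4 : ∑' k : ℕ, (1/2:ℝ)^(k + k₀) = (∑' k : ℕ, (1/2:ℝ)^k) * (1/2:ℝ)^k₀ := by
      simp_rw [pow_add]
      exact tsum_mul_right
    rw [h4, tsum_geometric_of_lt_one (by norm_num) (by norm_num)]
    ring
  linarith

end ComonAuxSection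

/-- Given `t < max φ` and `ψ ≡ 1` on `φ⁻¹[t,1]`, there is `ψ' ≤ ψ`, still `≡ 1` on `φ⁻¹[t,1]`,
which is comonotone with `φ`. -/
theorem exists_comonotone_dominated {X : Type*} [TopologicalSpace X] [CompactSpace X]
    [T2Space X] (φ ψ : X → ℝ) (hφc : Continuous φ) (hψc : Continuous ψ)
    (hφr : ∀ x, φ x ∈ Set.Icc (0:ℝ) 1) (hψr : ∀ x, ψ x ∈ Set.Icc (0:ℝ) 1)
    (t : ℝ) (ht : ∃ x, t < φ x)
    (hψ1 : ∀ x ∈ φ ⁻¹' Set.Icc t 1, ψ x = 1) :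
    ∃ ψ' : X → ℝ, Continuous ψ' ∧ (∀ x, ψ' x ∈ Set.Icc (0:ℝ) 1) ∧
      (∀ x ∈ φ ⁻¹' Set.Icc t 1, ψ' x = 1) ∧ (∀ x, ψ' x ≤ ψ x) ∧ Comonotone ψ' φ := by
  obtain ⟨x₀, hx₀⟩ := ht
  haveI : Nonempty X := ⟨x₀⟩
  have hψ1' : ∀ x, t ≤ φ x → ψ x = 1 := fun x hx => hψ1 x ⟨hx, (hφr x).2⟩
  -- choose moduli
  have hex : ∀ k : ℕ, ∃ δ > 0, ∀ y, t - δ ≤ φ y → 1 - (1/2:ℝ)^k ≤ ψ y :=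
    fun k => crux φ ψ hφc hψc (fun x => (hφr x).2) t hψ1' _ (by positivity)
  choose d0 d0pos hd0 using hex
  set d : ℕ → ℝ := fun k => (Finset.range (k+1)).inf' ⟨0, by simp⟩ d0 with hd_def
  have dpos : ∀ k, 0 < d k := fun k =>
    (Finset.lt_inf'_iff _).2 fun i _ => d0pos i
  have dante : ∀ k l, k ≤ l → d l ≤ d k := by
    intro k l hkl
    refine Finset.le_inf' _ _ fun j hj => ?_
    exact Finset.inf'_le _ (Finset.mem_range.2 (lt_of_lt_of_le (Finset.mem_range.1 hj)
      (by omega)))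
  have hd : ∀ k y, t - d k ≤ φ y → 1 - (1/2:ℝ)^k ≤ ψ y := by
    intro k y hy
    refine hd0 k y (le_trans (by
      have : d k ≤ d0 k := Finset.inf'_le _ (Finset.mem_range.2 (Nat.lt_succ_self k))
      linarith) hy)
  -- the modulus ω
  have ωcont := omegaMod_continuous d
  have ωnonneg := omegaMod_nonneg d
  have ωmono := omegaMod_mono d dpos
  -- key: ψ y + ω (t - φ y) ≥ 1
  have ωkey : ∀ y, 1 ≤ ψ y + omegaMod d (t - φ y) := by
    intro y
    by_cases hy : t ≤ φ y
    · have h1 := hψ1' y hy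
      have h2 := ωnonneg (t - φ y)
      linarith
    · push_neg at hy
      by_cases hall : ∀ k, t - φ y ≤ d k
      · have h1 : ∀ k : ℕ, 1 - (1/2:ℝ)^k ≤ ψ y := fun k => hd k y (by linarith [hall k])
        have h2 : (1:ℝ) ≤ ψ y := by
          have h3 : Filter.Tendsto (fun k : ℕ => 1 - (1/2:ℝ)^k) Filter.atTop (nhds 1) := by
            have h4 := tendsto_pow_atTop_nhds_zero_of_lt_one (r := (1/2:ℝ)) (by norm_num) (by norm_num)
            simpa using Filter.Tendsto.const_sub 1 h4
          exact le_of_tendsto h3 (Filter.Eventually.of_forall h1)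
        have := ωnonneg (t - φ y)
        linarith
      · push_neg at hall
        classical
        have hk₀ : d (Nat.find hall) < t - φ y := Nat.find_spec hall
        set k₀ := Nat.find hall with hk₀def
        have hge : ∀ k, k₀ ≤ k → d k ≤ t - φ y := fun k hk =>
          le_of_lt (lt_of_le_of_lt (dante k₀ k hk) hk₀)
        have hωr : (1/2:ℝ)^k₀ * 2 ≤ omegaMod d (t - φ y) := omegaMod_lb d dpos _ k₀ hge
        rcases Nat.eq_zero_or_pos k₀ with h0 | hpos
        · rw [h0] at hωr
          have := (hψr y).1
          norm_num at hωr
          linarith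
        · obtain ⟨m, hm⟩ : ∃ m, k₀ = m + 1 := ⟨k₀ - 1, by omega⟩
          have hnot : ¬ d m < t - φ y := Nat.find_min hall (by omega)
          push_neg at hnot
          have hψy : 1 - (1/2:ℝ)^m ≤ ψ y := hd m y (by linarith)
          have heq : (1/2:ℝ)^k₀ * 2 = (1/2:ℝ)^m := by
            rw [hm, pow_succ]; ring
          rw [heq] at hωr
          linarith
  -- the function G
  set G : ℝ → ℝ := fun s => ⨅ y, (ψ y + omegaMod d (s - φ y)) with hG_def
  have bdd : ∀ s : ℝ, BddBelow (Set.range fun y => ψ y + omegaMod d (s - φ y)) := by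
    intro s
    refine ⟨0, ?_⟩
    rintro _ ⟨y, rfl⟩
    exact add_nonneg (hψr y).1 (ωnonneg _)
  have Gmono : ∀ s s' : ℝ, s ≤ s' → G s ≤ G s' := by
    intro s s' hss
    exact ciInf_mono (bdd s) fun y => add_le_add_right (ωmono (by linarith)) _
  have Gnonneg : ∀ s, 0 ≤ G s := fun s =>
    le_ciInf fun y => add_nonneg (hψr y).1 (ωnonneg _)
  have Gle : ∀ x, G (φ x) ≤ ψ x := by
    intro x
    have h1 : G (φ x) ≤ ψ x + omegaMod d (φ x - φ x) := ciInf_le (bdd _) x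
    rwa [sub_self, omegaMod_zero d dpos le_rfl, add_zero] at h1
  have Gge1 : ∀ s, t ≤ s → 1 ≤ G s := by
    intro s hts
    refine le_ciInf fun y => ?_
    calc (1:ℝ) ≤ ψ y + omegaMod d (t - φ y) := ωkey y
    _ ≤ ψ y + omegaMod d (s - φ y) := add_le_add_right (ωmono (by linarith)) _
  have Gcont : Continuous G := by
    rw [Metric.continuous_iff]
    intro s₀ ε hε
    have hUC := (isCompact_Icc (a := s₀ - 2) (b := s₀ + 2)).uniformContinuousOn_of_continuous
      ωcont.continuousOn
    rw [Metric.uniformContinuousOn_iff] at hUC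
    obtain ⟨δ, hδ, hδ'⟩ := hUC (ε/2) (by linarith)
    refine ⟨min δ 1, by positivity, fun s hs => ?_⟩
    have hd1 : dist s s₀ < δ := lt_of_lt_of_le hs (min_le_left _ _)
    have hd2 : |s - s₀| < 1 := by
      have := lt_of_lt_of_le hs (min_le_right _ _)
      rwa [Real.dist_eq] at this
    have hd2' := abs_lt.mp hd2
    have key : ∀ y, |omegaMod d (s - φ y) - omegaMod d (s₀ - φ y)| ≤ ε/2 := by
      intro y
      have h1 := (hφr y).1
      have h2 := (hφr y).2
      have hm1 : s - φ y ∈ Icc (s₀ - 2) (s₀ + 2) := ⟨by linarith, by linarith⟩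
      have hm2 : s₀ - φ y ∈ Icc (s₀ - 2) (s₀ + 2) := ⟨by linarith, by linarith⟩
      have h3 : dist (s - φ y) (s₀ - φ y) < δ := by
        rw [Real.dist_eq]
        have : s - φ y - (s₀ - φ y) = s - s₀ := by ring
        rw [this]
        rwa [Real.dist_eq] at hd1
      have h4 := hδ' _ hm1 _ hm2 h3
      rw [Real.dist_eq] at h4
      exact le_of_lt h4
    have hle1 : G s ≤ G s₀ + ε/2 := by
      have h5 : ∀ y, G s - ε/2 ≤ ψ y + omegaMod d (s₀ - φ y) := by
        intro y
        have h6 : G s ≤ ψ y + omegaMod d (s - φ y) := ciInf_le (bdd s) y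
        have h7 := abs_le.mp (key y)
        linarith [h7.1, h7.2]
      have h8 := le_ciInf h5
      have h9 : (⨅ y, (ψ y + omegaMod d (s₀ - φ y))) = G s₀ := rfl
      linarith [h8.trans_eq h9]
    have hle2 : G s₀ ≤ G s + ε/2 := by
      have h5 : ∀ y, G s₀ - ε/2 ≤ ψ y + omegaMod d (s - φ y) := by
        intro y
        have h6 : G s₀ ≤ ψ y + omegaMod d (s₀ - φ y) := ciInf_le (bdd s₀) y
        have h7 := abs_le.mp (key y)
        linarith [h7.1, h7.2]
      have h8 := le_ciInf h5
      have h9 : (⨅ y, (ψ y + omegaMod d (s - φ y))) = G s := rfl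
      linarith [h8.trans_eq h9]
    rw [Real.dist_eq, abs_lt]
    constructor <;> linarith
  -- assemble
  refine ⟨fun x => G (φ x), Gcont.comp hφc, fun x => ⟨Gnonneg _, (Gle x).trans (hψr x).2⟩,
    fun x hx => ?_, Gle, ?_⟩
  · have h1 : ψ x = 1 := hψ1 x hx
    have h2 : G (φ x) ≤ 1 := h1 ▸ Gle x
    exact le_antisymm h2 (Gge1 _ hx.1)
  · intro x₁ x₂
    rcases le_total (φ x₁) (φ x₂) with h | h
    · have := Gmono _ _ h
      nlinarith
    · have := Gmono _ _ h
      nlinarith
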